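/- If a topological space X has a σ-disjoint π-base and πw(X) is a singular cardinal of countable cofinality, then the cellularity of X equals πw(X), i.e., c(X) = sup of cardinalities of cellular families in X equals πw(X). -/
import Mathlib


/-- A π-base for `X`: a family of nonempty open sets such that every nonempty open set
contains a member of the family. -/
def IsPiBase (X : Type*) [TopologicalSpace X] (𝓟 : Set (Set X)) : Prop :=
  (∀ P ∈ 𝓟, IsOpen P ∧ P.Nonempty) ∧ ∀ U : Set X, IsOpen U → U.Nonempty → ∃ P ∈ 𝓟, P ⊆ U

/-- The π-weight of `X`: the least cardinality of a π-base. -/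
noncomputable def piWeight (X : Type*) [TopologicalSpace X] : Cardinal :=
  sInf {c | ∃ 𝓟 : Set (Set X), IsPiBase X 𝓟 ∧ c = Cardinal.mk 𝓟}

/-- A cellular family: a pairwise disjoint family of nonempty open sets. -/
def IsCellular {X : Type*} [TopologicalSpace X] (𝓤 : Set (Set X)) : Prop :=
  (∀ U ∈ 𝓤, IsOpen U ∧ U.Nonempty) ∧ 𝓤.PairwiseDisjoint id

/-- The cellularity of `X`: the supremum of the cardinalities of cellular families. -/
noncomputable def cellularity (X : Type*) [TopologicalSpace X] : Cardinal :=
  ⨆ 𝓤 : {𝓤 : Set (Set X) // IsCellular 𝓤}, Cardinal.mk 𝓤.1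

/-- If `X` has a σ-disjoint π-base and `πw(X)` is a singular cardinal of countable cofinality,
then the cellularity of `X` equals `πw(X)`. -/
theorem stmt3 {X : Type*} [TopologicalSpace X] (𝓑 : ℕ → Set (Set X))
    (hpb : IsPiBase X (⋃ n, 𝓑 n)) (hdisj : ∀ n, (𝓑 n).PairwiseDisjoint id)
    (hsing : Cardinal.aleph0 < piWeight X) (hcof : (piWeight X).ord.cof = Cardinal.aleph0) :
    cellularity X = piWeight X := by
  haveI : Nonempty {𝓤 : Set (Set X) // IsCellular 𝓤} :=
    ⟨⟨∅, ⟨fun U hU => absurd hU (Set.notMem_empty U), Set.pairwiseDisjoint_empty⟩⟩⟩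
  -- a π-base realizing the π-weight
  have hmem : piWeight X ∈ {c | ∃ 𝓟 : Set (Set X), IsPiBase X 𝓟 ∧ c = Cardinal.mk 𝓟} :=
    csInf_mem ⟨_, ⋃ n, 𝓑 n, hpb, rfl⟩
  obtain ⟨𝓟, h𝓟, hcard⟩ := hmem
  -- cellularity ≤ piWeight
  have hub : cellularity X ≤ piWeight X := by
    apply ciSup_le
    rintro ⟨𝓤, h𝓤o, h𝓤d⟩
    rw [hcard]
    have hex : ∀ U : 𝓤, ∃ P : 𝓟, (P : Set X) ⊆ (U : Set X) := by
      rintro ⟨U, hU⟩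
      obtain ⟨P, hP, hPU⟩ := h𝓟.2 U (h𝓤o U hU).1 (h𝓤o U hU).2
      exact ⟨⟨P, hP⟩, hPU⟩
    choose f hf using hex
    refine Cardinal.mk_le_of_injective (f := f) ?_
    intro U V hUV
    by_contra hne
    have hne' : (U : Set X) ≠ (V : Set X) := fun h => hne (Subtype.ext h)
    have hd : Disjoint (U : Set X) (V : Set X) := h𝓤d U.2 V.2 hne'
    obtain ⟨x, hx⟩ := (h𝓟.1 _ (f U).2).2
    exact Set.disjoint_left.mp hd (hf U hx) (hf V (hUV ▸ hx))
  -- piWeight ≤ cellularity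
  have hlow : piWeight X ≤ cellularity X := by
    have h1 : piWeight X ≤ Cardinal.mk ↥(⋃ n, 𝓑 n) := csInf_le' ⟨⋃ n, 𝓑 n, hpb, rfl⟩
    have h2 := Cardinal.mk_iUnion_le_lift (f := 𝓑)
    simp only [Cardinal.lift_uzero, Cardinal.mk_nat, Cardinal.lift_aleph0] at h2
    have hsup : (⨆ n, Cardinal.mk (𝓑 n)) ≤ cellularity X := by
      apply ciSup_le
      intro n
      have hc : IsCellular (𝓑 n) :=
        ⟨fun U hU => hpb.1 U (Set.mem_iUnion.2 ⟨n, hU⟩), hdisj n⟩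
      exact le_ciSup (Cardinal.bddAbove_range _)
        (⟨𝓑 n, hc⟩ : {𝓤 : Set (Set X) // IsCellular 𝓤})
    have h3 : piWeight X ≤ Cardinal.aleph0 * ⨆ n, Cardinal.mk (𝓑 n) := h1.trans h2
    have h4 : Cardinal.aleph0 * (⨆ n, Cardinal.mk (𝓑 n)) ≤
        max Cardinal.aleph0 (⨆ n, Cardinal.mk (𝓑 n)) := by
      refine (Cardinal.mul_le_max _ _).trans ?_
      simp [max_comm, max_assoc, max_left_comm]
    rcases le_max_iff.mp (h3.trans h4) with h | h
    · exact absurd h (not_le.mpr hsing)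
    · exact h.trans hsup
  exact le_antisymm hub hlow
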